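/- (Theorem 1, probabilistic core: the ASAP pruning rule only fires for expected-suboptimal operations.) Fix an integer N ≥ 1 and reals δ ∈ (0,1), η > 0, L > 0. For each i ∈ {1, …, N} let (g_{s,i})_{s ≥ 1} be real-valued random variables on a common probability space such that for each fixed i the family (g_{s,i})_{s ≥ 1} is independent and g_{s,i} ∈ [−ηL, ηL] almost surely; set α_{t,i} = Σ_{s=1}^t g_{s,i} and ᾱ_{t,i} = Σ_{s=1}^t E[g_{s,i}]. Let (ν_t)_{t ≥ 1} be positive reals with t + log(1/(N ν_t)) > 0 for every t ≥ 1, and define the threshold policy θ_t = ν_t e^{−t}, ρ_t = t/(t + log(1/(N ν_t))), and annealing schedule T_t = ηL·ρ_t·sqrt((8/t)·log(π² N t² / (3δ))). Then with probability at least 1 − δ the following holds: for every t ≥ 1 and every i ∈ {1, …, N}, if Φ_i(α_{t,·}; T_t) < θ_t then ᾱ_{t,i} < max_{1 ≤ j ≤ N} ᾱ_{t,j}; in particular, no operation maximizing the expected accumulated weight ever satisfies the pruning condition. -/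

import Mathlib

open MeasureTheory ProbabilityTheory Real Finset

/-- The softmax weight of coordinate `i` of `α : Fin N → ℝ` at temperature `T`. -/
noncomputable def softmaxWeight {N : ℕ} (α : Fin N → ℝ) (T : ℝ) (i : Fin N) : ℝ :=
  Real.exp (α i / T) / ∑ j, Real.exp (α j / T)

/-- Core scalar inequality behind Hoeffding's lemma. -/
lemma asap_key_ineq {p : ℝ} (hp0 : 0 ≤ p) (hp1 : p ≤ 1) (u : ℝ) :
    1 - p + p * Real.exp u ≤ Real.exp (p * u + u ^ 2 / 8) := by
  set D : ℝ → ℝ := fun x => 1 - p + p * Real.exp x with hD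
  have hDpos : ∀ x, 0 < D x := by
    intro x
    rcases lt_or_eq_of_le hp1 with h | h
    · have : 0 ≤ p * Real.exp x := mul_nonneg hp0 (exp_pos x).le
      simp only [hD]; linarith
    · have := exp_pos x
      simp only [hD, ← h]; nlinarith
  set F : ℝ → ℝ := fun x => p * x + x ^ 2 / 8 - Real.log (D x) with hF
  set F' : ℝ → ℝ := fun x => p + x / 4 - p * Real.exp x / D x with hF'
  have hDder : ∀ x, HasDerivAt D (p * Real.exp x) x := by
    intro x
    exact ((Real.hasDerivAt_exp x).const_mul p).const_add (1 - p)
  have hFder : ∀ x, HasDerivAt F (F' x) x := by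
    intro x
    have h1 : HasDerivAt (fun x : ℝ => p * x + x ^ 2 / 8) (p + x * 2 / 8) x := by
      have := ((hasDerivAt_pow 2 x).div_const 8).const_add 0
      have h2 : HasDerivAt (fun x : ℝ => p * x) p x := by
        simpa using (hasDerivAt_id x).const_mul p
      have h4 := h2.add ((hasDerivAt_pow 2 x).div_const 8)
      exact h4.congr_deriv (by norm_num; ring)
    have h3 : HasDerivAt (fun x => Real.log (D x)) (p * Real.exp x / D x) x :=
      (hDder x).log (hDpos x).ne'
    have := h1.sub h3
    refine this.congr_deriv ?_
    simp only [hF']; ring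
  have hF'der : ∀ x, HasDerivAt F'
      (1 / 4 - p * Real.exp x * (1 - p) / (D x) ^ 2) x := by
    intro x
    have h1 : HasDerivAt (fun x : ℝ => p + x / 4) (1 / 4) x := by
      simpa using ((hasDerivAt_id x).div_const 4).const_add p
    have h2 : HasDerivAt (fun x => p * Real.exp x / D x)
        ((p * Real.exp x * D x - p * Real.exp x * (p * Real.exp x)) / (D x) ^ 2) x :=
      ((Real.hasDerivAt_exp x).const_mul p).div (hDder x) (hDpos x).ne'
    have := h1.sub h2
    refine this.congr_deriv ?_
    have hd : D x = 1 - p + p * Real.exp x := rfl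
    rw [hd]
    ring
  have hF''nonneg : ∀ x, 0 ≤ 1 / 4 - p * Real.exp x * (1 - p) / (D x) ^ 2 := by
    intro x
    have hd : D x = 1 - p + p * Real.exp x := rfl
    have key : p * Real.exp x * (1 - p) * 4 ≤ (D x) ^ 2 := by
      have := sq_nonneg (p * Real.exp x - (1 - p))
      rw [hd]; nlinarith
    have h2 : p * Real.exp x * (1 - p) / (D x) ^ 2 ≤ 1 / 4 := by
      rw [div_le_div_iff₀ (pow_pos (hDpos x) 2) (by norm_num)]
      linarith
    linarith
  have hF'mono : Monotone F' := by
    refine monotone_of_deriv_nonneg (fun x => (hF'der x).differentiableAt) ?_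
    intro x
    rw [(hF'der x).deriv]
    exact hF''nonneg x
  have hF'0 : F' 0 = 0 := by
    simp only [hF']
    have : D 0 = 1 := by simp [hD]
    rw [this]; simp
  have hge : ∀ x, F 0 ≤ F x := by
    intro x
    rcases le_total 0 x with h | h
    · have hmono : MonotoneOn F (Set.Ici 0) := by
        refine monotoneOn_of_deriv_nonneg (convex_Ici 0)
          (fun x hx => (hFder x).continuousAt.continuousWithinAt)
          (fun x hx => (hFder x).differentiableAt.differentiableWithinAt) ?_
        intro x hx
        rw [(hFder x).deriv]
        rw [interior_Ici] at hx
        have : (0:ℝ) ≤ x := le_of_lt hx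
        calc (0:ℝ) = F' 0 := hF'0.symm
          _ ≤ F' x := hF'mono this
      exact hmono Set.self_mem_Ici h h
    · have hanti : AntitoneOn F (Set.Iic 0) := by
        refine antitoneOn_of_deriv_nonpos (convex_Iic 0)
          (fun x hx => (hFder x).continuousAt.continuousWithinAt)
          (fun x hx => (hFder x).differentiableAt.differentiableWithinAt) ?_
        intro x hx
        rw [(hFder x).deriv]
        rw [interior_Iic] at hx
        have : x ≤ (0:ℝ) := le_of_lt hx
        calc F' x ≤ F' 0 := hF'mono this
          _ = 0 := hF'0
      exact hanti h Set.self_mem_Iic h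
  have hF0 : F 0 = 0 := by
    simp only [hF]
    have : D 0 = 1 := by simp [hD]
    rw [this]; simp
  have := hge u
  rw [hF0] at this
  have hlog : Real.log (D u) ≤ p * u + u ^ 2 / 8 := by
    simp only [hF] at this; linarith
  calc 1 - p + p * Real.exp u = D u := rfl
    _ = Real.exp (Real.log (D u)) := (Real.exp_log (hDpos u)).symm
    _ ≤ Real.exp (p * u + u ^ 2 / 8) := exp_le_exp.mpr hlog

/-- Hoeffding's lemma: mgf bound for a bounded random variable. -/
lemma asap_mgf_le {Ω : Type*} [MeasurableSpace Ω] (μ : Measure Ω) [IsProbabilityMeasure μ]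
    {X : Ω → ℝ} (hX : Measurable X) {a b : ℝ} (hab : a ≤ b)
    (h : ∀ᵐ ω ∂μ, X ω ∈ Set.Icc a b) (lam : ℝ) :
    mgf X μ lam ≤ Real.exp (lam * (∫ x, X x ∂μ) + lam ^ 2 * (b - a) ^ 2 / 8) := by
  have hXint : Integrable X μ := by
    refine (integrable_const (max |a| |b|)).mono' hX.aestronglyMeasurable ?_
    filter_upwards [h] with ω hω
    rw [Real.norm_eq_abs]
    rcases hω with ⟨h1, h2⟩
    rcases abs_cases (X ω) with ⟨he, _⟩ | ⟨he, _⟩ <;> rw [he]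
    · exact le_trans h2 ((le_abs_self b).trans (le_max_right _ _))
    · exact le_trans (by linarith [neg_abs_le a]) (le_max_left |a| |b|)
  set m : ℝ := ∫ x, X x ∂μ with hm
  have hint : ∀ c : ℝ, Integrable (fun ω => Real.exp (c * X ω)) μ := by
    intro c
    refine (integrable_const (Real.exp (max (c*a) (c*b)))).mono'
      (hX.const_mul c).exp.aestronglyMeasurable ?_
    filter_upwards [h] with ω hω
    rw [Real.norm_eq_abs, abs_of_pos (exp_pos _), Real.exp_le_exp]
    rcases le_total 0 c with hc | hc
    · exact le_max_of_le_right (by nlinarith [hω.2])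
    · exact le_max_of_le_left (by nlinarith [hω.1])
  have hma : a ≤ m := by
    have : ∫ x, (a : ℝ) ∂μ ≤ m := by
      refine integral_mono_ae (integrable_const a) hXint ?_
      filter_upwards [h] with ω hω using hω.1
    simpa using this
  have hmb : m ≤ b := by
    have : m ≤ ∫ x, (b : ℝ) ∂μ := by
      refine integral_mono_ae hXint (integrable_const b) ?_
      filter_upwards [h] with ω hω using hω.2
    simpa using this
  rcases eq_or_lt_of_le hab with heq | hlt
  · -- degenerate case a = b : X = a a.e.
    have hXa : ∀ᵐ ω ∂μ, X ω = a := by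
      filter_upwards [h] with ω hω
      rw [← heq] at hω
      exact le_antisymm hω.2 hω.1
    have hmgf : mgf X μ lam = Real.exp (lam * a) := by
      rw [mgf]
      rw [integral_congr_ae (g := fun _ => Real.exp (lam * a))
        (by filter_upwards [hXa] with ω hω; rw [hω])]
      simp
    have hmeq : m = a := le_antisymm (heq ▸ hmb) hma
    rw [hmgf, hmeq, Real.exp_le_exp]
    nlinarith [sq_nonneg lam, sq_nonneg (b - a)]
  · -- main case a < b
    have hba : (0:ℝ) < b - a := by linarith
    -- pointwise chord bound
    have chord : ∀ᵐ ω ∂μ, Real.exp (lam * X ω) ≤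
        ((b - X ω) * Real.exp (lam * a) + (X ω - a) * Real.exp (lam * b)) / (b - a) := by
      filter_upwards [h] with ω hω
      have hw1 : (0:ℝ) ≤ (b - X ω) / (b - a) := div_nonneg (by linarith [hω.2]) hba.le
      have hw2 : (0:ℝ) ≤ (X ω - a) / (b - a) := div_nonneg (by linarith [hω.1]) hba.le
      have hw3 : (b - X ω) / (b - a) + (X ω - a) / (b - a) = 1 := by field_simp; ring
      have hconv := convexOn_exp.2 (Set.mem_univ (lam * a)) (Set.mem_univ (lam * b)) hw1 hw2 hw3
      simp only [smul_eq_mul] at hconv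
      have harg : (b - X ω) / (b - a) * (lam * a) + (X ω - a) / (b - a) * (lam * b)
          = lam * X ω := by
        rw [div_mul_eq_mul_div, div_mul_eq_mul_div, ← add_div,
          div_eq_iff hba.ne']
        ring
      rw [harg] at hconv
      calc Real.exp (lam * X ω) ≤ (b - X ω) / (b - a) * Real.exp (lam * a)
            + (X ω - a) / (b - a) * Real.exp (lam * b) := hconv
        _ = ((b - X ω) * Real.exp (lam * a) + (X ω - a) * Real.exp (lam * b)) / (b - a) := by
            ring
    -- integrate
    have hstep : mgf X μ lam ≤
        ((b - m) * Real.exp (lam * a) + (m - a) * Real.exp (lam * b)) / (b - a) := by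
      have hRint : Integrable (fun ω =>
          ((b - X ω) * Real.exp (lam * a) + (X ω - a) * Real.exp (lam * b)) / (b - a)) μ := by
        apply Integrable.div_const
        exact (((integrable_const b).sub hXint).mul_const _).add
          ((hXint.sub (integrable_const a)).mul_const _)
      have := integral_mono_ae (hint lam) hRint chord
      refine le_trans this (le_of_eq ?_)
      rw [integral_div]
      congr 1
      have hrw : (fun ω => (b - X ω) * Real.exp (lam * a) + (X ω - a) * Real.exp (lam * b))
          = fun ω => X ω * (Real.exp (lam * b) - Real.exp (lam * a))
              + (b * Real.exp (lam * a) - a * Real.exp (lam * b)) := by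
        funext ω; ring
      rw [hrw, integral_add (hXint.mul_const _) (integrable_const _), integral_mul_const,
        integral_const]
      simp only [measure_univ, probReal_univ, ENNReal.toReal_one, smul_eq_mul, one_mul, ← hm]
      ring
    refine hstep.trans ?_
    set p : ℝ := (m - a) / (b - a) with hp
    set u : ℝ := lam * (b - a) with hu
    have hp0 : 0 ≤ p := div_nonneg (by linarith) hba.le
    have hp1 : p ≤ 1 := by rw [hp, div_le_one hba]; linarith
    have hkey := asap_key_ineq hp0 hp1 u
    have heq1 : ((b - m) * Real.exp (lam * a) + (m - a) * Real.exp (lam * b)) / (b - a)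
        = Real.exp (lam * a) * (1 - p + p * Real.exp u) := by
      have : Real.exp (lam * b) = Real.exp (lam * a) * Real.exp u := by
        rw [← Real.exp_add, hu]; ring_nf
      rw [this, hp]
      field_simp
      ring
    rw [heq1]
    calc Real.exp (lam * a) * (1 - p + p * Real.exp u)
        ≤ Real.exp (lam * a) * Real.exp (p * u + u ^ 2 / 8) := by
          exact mul_le_mul_of_nonneg_left hkey (exp_pos _).le
      _ = Real.exp (lam * a + (p * u + u ^ 2 / 8)) := by rw [← Real.exp_add]
      _ ≤ Real.exp (lam * m + lam ^ 2 * (b - a) ^ 2 / 8) := by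
          rw [Real.exp_le_exp]
          have hpu : p * u = lam * (m - a) := by
            rw [hp, hu]; field_simp
          have huu : u ^ 2 = lam ^ 2 * (b - a) ^ 2 := by rw [hu]; ring
          rw [hpu, huu]; ring_nf
          exact le_refl _

/-- Two-sided Hoeffding tail bound for a sum of independent bounded random variables. -/
lemma asap_tail {Ω : Type*} [MeasurableSpace Ω] (μ : Measure Ω) [IsProbabilityMeasure μ]
    {ι : Type*} (A : Finset ι) (X : ι → Ω → ℝ) (hmeas : ∀ i, Measurable (X i))
    (hindep : iIndepFun X μ) {c : ℝ} (hc : 0 < c)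
    (hbdd : ∀ i, ∀ᵐ ω ∂μ, X i ω ∈ Set.Icc (-c) c) {ε : ℝ} (hε : 0 < ε)
    (hA : A.Nonempty) :
    μ {ω | ε ≤ |(∑ i ∈ A, X i ω) - ∑ i ∈ A, ∫ x, X i x ∂μ|} ≤
      ENNReal.ofReal (2 * Real.exp (-(ε ^ 2) / (2 * A.card * c ^ 2))) := by
  classical
  set n : ℕ := A.card with hn
  have hnpos : 0 < (n : ℝ) := by
    have := Finset.card_pos.mpr hA
    exact_mod_cast this
  set S : Ω → ℝ := fun ω => ∑ i ∈ A, X i ω with hS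
  have hSmeas : Measurable S := Finset.measurable_sum A (fun i _ => hmeas i)
  set m : ℝ := ∑ i ∈ A, ∫ x, X i x ∂μ with hm
  set lam : ℝ := ε / (n * c ^ 2) with hlam
  have hlampos : 0 < lam := by positivity
  have hSbdd : ∀ᵐ ω ∂μ, |S ω| ≤ n * c := by
    have hall : ∀ᵐ ω ∂μ, ∀ i ∈ A, X i ω ∈ Set.Icc (-c) c :=
      (Finset.eventually_all A).mpr (fun i _ => hbdd i)
    filter_upwards [hall] with ω hω
    calc |S ω| ≤ ∑ i ∈ A, |X i ω| := Finset.abs_sum_le_sum_abs _ _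
      _ ≤ ∑ i ∈ A, c := Finset.sum_le_sum (fun i hi => abs_le.mpr ⟨(hω i hi).1, (hω i hi).2⟩)
      _ = n * c := by rw [Finset.sum_const, hn]; simp [mul_comm]
  have hint : ∀ l : ℝ, Integrable (fun ω => Real.exp (l * S ω)) μ := by
    intro l
    refine (integrable_const (Real.exp (|l| * (n * c)))).mono'
      (hSmeas.const_mul l).exp.aestronglyMeasurable ?_
    filter_upwards [hSbdd] with ω hω
    rw [Real.norm_eq_abs, abs_of_pos (exp_pos _), Real.exp_le_exp]
    calc l * S ω ≤ |l * S ω| := le_abs_self _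
      _ = |l| * |S ω| := abs_mul _ _
      _ ≤ |l| * (n * c) := by
          exact mul_le_mul_of_nonneg_left hω (abs_nonneg l)
  have hmgf : ∀ l : ℝ, mgf S μ l ≤ Real.exp (l * m + n * l ^ 2 * c ^ 2 / 2) := by
    intro l
    rw [hS, show (fun ω => ∑ i ∈ A, X i ω) = ∑ i ∈ A, X i by funext ω; simp,
      hindep.mgf_sum hmeas A]
    calc ∏ i ∈ A, mgf (X i) μ l
        ≤ ∏ i ∈ A, Real.exp (l * (∫ x, X i x ∂μ) + l ^ 2 * (c - -c) ^ 2 / 8) := by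
          refine Finset.prod_le_prod (fun i _ => mgf_nonneg) (fun i _ => ?_)
          exact asap_mgf_le μ (hmeas i) (by linarith) (hbdd i) l
      _ = Real.exp (∑ i ∈ A, (l * (∫ x, X i x ∂μ) + l ^ 2 * (c - -c) ^ 2 / 8)) :=
          (Real.exp_sum A _).symm
      _ = Real.exp (l * m + n * l ^ 2 * c ^ 2 / 2) := by
          rw [Finset.sum_add_distrib, ← Finset.mul_sum, Finset.sum_const, hn, ← hm,
            nsmul_eq_mul]
          congr 1
          ring
  have hexp : -lam * ε + lam * m + n * lam ^ 2 * c ^ 2 / 2 - lam * m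
      = -(ε ^ 2) / (2 * n * c ^ 2) := by
    rw [hlam]
    field_simp
    ring
  -- upper tail
  have hup : μ {ω | m + ε ≤ S ω} ≤
      ENNReal.ofReal (Real.exp (-(ε ^ 2) / (2 * n * c ^ 2))) := by
    rw [ENNReal.le_ofReal_iff_toReal_le (measure_ne_top μ _) (exp_pos _).le]
    calc (μ {ω | m + ε ≤ S ω}).toReal
        ≤ Real.exp (-lam * (m + ε)) * mgf S μ lam :=
          measure_ge_le_exp_mul_mgf (m + ε) hlampos.le (hint lam)
      _ ≤ Real.exp (-lam * (m + ε)) * Real.exp (lam * m + n * lam ^ 2 * c ^ 2 / 2) :=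
          mul_le_mul_of_nonneg_left (hmgf lam) (exp_pos _).le
      _ = Real.exp (-(ε ^ 2) / (2 * n * c ^ 2)) := by
          rw [← Real.exp_add, ← hexp]; ring_nf
  -- lower tail
  have hlo : μ {ω | S ω ≤ m - ε} ≤
      ENNReal.ofReal (Real.exp (-(ε ^ 2) / (2 * n * c ^ 2))) := by
    rw [ENNReal.le_ofReal_iff_toReal_le (measure_ne_top μ _) (exp_pos _).le]
    calc (μ {ω | S ω ≤ m - ε}).toReal
        ≤ Real.exp (-(-lam) * (m - ε)) * mgf S μ (-lam) :=
          measure_le_le_exp_mul_mgf (m - ε) (by linarith) (hint (-lam))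
      _ ≤ Real.exp (lam * (m - ε)) * Real.exp (-lam * m + n * (-lam) ^ 2 * c ^ 2 / 2) := by
          rw [show -(-lam) * (m - ε) = lam * (m - ε) by ring]
          refine mul_le_mul_of_nonneg_left ?_ (exp_pos _).le
          have := hmgf (-lam)
          rwa [show (-lam) * m = -lam * m by ring] at this
      _ = Real.exp (-(ε ^ 2) / (2 * n * c ^ 2)) := by
          rw [← Real.exp_add, ← hexp]; ring_nf
  calc μ {ω | ε ≤ |S ω - m|}
      ≤ μ ({ω | m + ε ≤ S ω} ∪ {ω | S ω ≤ m - ε}) := by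
        refine measure_mono (fun ω hω => ?_)
        rw [Set.mem_setOf_eq] at hω
        rcases abs_cases (S ω - m) with ⟨he, _⟩ | ⟨he, _⟩
        · left; rw [Set.mem_setOf_eq]; rw [he] at hω; linarith
        · right; rw [Set.mem_setOf_eq]; rw [he] at hω; linarith
    _ ≤ μ {ω | m + ε ≤ S ω} + μ {ω | S ω ≤ m - ε} := measure_union_le _ _
    _ ≤ ENNReal.ofReal (Real.exp (-(ε ^ 2) / (2 * n * c ^ 2)))
        + ENNReal.ofReal (Real.exp (-(ε ^ 2) / (2 * n * c ^ 2))) := add_le_add hup hlo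
    _ = ENNReal.ofReal (2 * Real.exp (-(ε ^ 2) / (2 * n * c ^ 2))) := by
        rw [← ENNReal.ofReal_add (exp_pos _).le (exp_pos _).le]; ring_nf

lemma asap_softmax_lt {N : ℕ} (α : Fin N → ℝ) {Tt θt : ℝ} (hT : 0 < Tt) (hθ : 0 < θt)
    (i : Fin N) (ne : (Finset.univ : Finset (Fin N)).Nonempty)
    (h : softmaxWeight α Tt i < θt) :
    α i < Finset.univ.sup' ne α + Tt * Real.log (θt * N) := by
  have hNpos : (0:ℝ) < N := by
    have : 0 < N := (Finset.univ_nonempty_iff.mp ne).elim (fun j => j.pos)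
    exact_mod_cast this
  set M : ℝ := Finset.univ.sup' ne α with hM
  have hSpos : 0 < ∑ j, Real.exp (α j / Tt) :=
    Finset.sum_pos (fun j _ => exp_pos _) ne
  have h1 : Real.exp (α i / Tt) < θt * ∑ j, Real.exp (α j / Tt) := by
    rw [softmaxWeight, div_lt_iff₀ hSpos] at h
    linarith
  have h2 : ∑ j, Real.exp (α j / Tt) ≤ (N : ℝ) * Real.exp (M / Tt) := by
    calc ∑ j, Real.exp (α j / Tt) ≤ ∑ _j : Fin N, Real.exp (M / Tt) := by
          refine Finset.sum_le_sum (fun j _ => ?_)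
          have : α j ≤ M := Finset.le_sup' α (Finset.mem_univ j)
          exact exp_le_exp.mpr (by gcongr)
      _ = (N : ℝ) * Real.exp (M / Tt) := by
          rw [Finset.sum_const, Finset.card_univ, Fintype.card_fin, nsmul_eq_mul]
  have h3 : Real.exp (α i / Tt) < θt * ((N:ℝ) * Real.exp (M / Tt)) :=
    h1.trans_le (mul_le_mul_of_nonneg_left h2 hθ.le)
  have h4 : α i / Tt < Real.log θt + Real.log N + M / Tt := by
    have := Real.log_lt_log (exp_pos _) h3
    rw [Real.log_exp, Real.log_mul hθ.ne' (by positivity),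
      Real.log_mul hNpos.ne' (exp_pos _).ne', Real.log_exp] at this
    linarith
  have h5 : Tt * Real.log (θt * N) = Tt * (Real.log θt + Real.log N) := by
    rw [Real.log_mul hθ.ne' hNpos.ne']
  rw [h5]
  have h4' := mul_lt_mul_of_pos_right h4 hT
  rw [div_mul_cancel₀ _ hT.ne'] at h4'
  have he : (Real.log θt + Real.log (N:ℝ) + M / Tt) * Tt
      = M + Tt * (Real.log θt + Real.log (N:ℝ)) := by field_simp; ring
  rw [he] at h4'
  exact h4'

/-- Theorem 1, probabilistic core: with threshold policy `θ_t = ν_t e^{−t}`,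
`ρ_t = t/(t + log(1/(N ν_t)))` and annealing schedule
`T_t = ηL·ρ_t·sqrt((8/t)·log(π² N t²/(3δ)))`, with probability at least `1 − δ`, whenever the
ASAP pruning rule `Φ_i(α_{t,·}; T_t) < θ_t` fires, the operation `i` is suboptimal in
expectation: `ᾱ_{t,i} < max_j ᾱ_{t,j}`. -/
theorem asap_prunes_only_suboptimal
    {Ω : Type*} [MeasurableSpace Ω] (μ : Measure Ω) [IsProbabilityMeasure μ]
    (N : ℕ) (hN : 1 ≤ N)
    (δ η L : ℝ) (hδ : δ ∈ Set.Ioo (0 : ℝ) 1) (hη : 0 < η) (hL : 0 < L)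
    (g : Fin N → ℕ → Ω → ℝ)
    (hmeas : ∀ i, ∀ s, 1 ≤ s → Measurable (g i s))
    (hindep : ∀ i, iIndepFun (fun s : {s : ℕ // 1 ≤ s} => g i s) μ)
    (hbdd : ∀ i, ∀ s, 1 ≤ s → ∀ᵐ ω ∂μ, g i s ω ∈ Set.Icc (-(η * L)) (η * L))
    (ν : ℕ → ℝ) (hν : ∀ t, 1 ≤ t → 0 < ν t)
    (hνpos : ∀ t : ℕ, 1 ≤ t → 0 < (t : ℝ) + Real.log (1 / (N * ν t)))
    (θ T ρ : ℕ → ℝ)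
    (hθ : ∀ t : ℕ, θ t = ν t * Real.exp (-(t : ℝ)))
    (hρ : ∀ t : ℕ, ρ t = (t : ℝ) / ((t : ℝ) + Real.log (1 / (N * ν t))))
    (hT : ∀ t : ℕ, T t =
      η * L * ρ t * Real.sqrt ((8 / t) * Real.log (π ^ 2 * N * t ^ 2 / (3 * δ)))) :
    ENNReal.ofReal (1 - δ) ≤
      μ {ω | ∀ t : ℕ, 1 ≤ t → ∀ i : Fin N,
          softmaxWeight (fun j => ∑ s ∈ Finset.Icc 1 t, g j s ω) (T t) i < θ t →
            (∑ s ∈ Finset.Icc 1 t, ∫ x, g i s x ∂μ) <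
              Finset.univ.sup' (Finset.univ_nonempty_iff.mpr ⟨i⟩)
                (fun j => ∑ s ∈ Finset.Icc 1 t, ∫ x, g j s x ∂μ)} := by
  classical
  obtain ⟨hδ0, hδ1⟩ := hδ
  have hNR : (1:ℝ) ≤ (N:ℝ) := by exact_mod_cast hN
  set c : ℝ := η * L with hc
  have hcpos : 0 < c := mul_pos hη hL
  set K : ℕ → ℝ := fun t => π ^ 2 * N * t ^ 2 / (3 * δ) with hK
  set β : ℕ → ℝ := fun t => c * Real.sqrt (2 / t * Real.log (K t)) with hβ
  have hπ3 : (3:ℝ) < π := pi_gt_three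
  have hKpos : ∀ t : ℕ, 1 ≤ t → 0 < K t := by
    intro t ht
    have htR : (1:ℝ) ≤ (t:ℝ) := by exact_mod_cast ht
    have : (0:ℝ) < (t:ℝ) := by linarith
    simp only [hK]
    positivity
  have hK1 : ∀ t : ℕ, 1 ≤ t → 1 < K t := by
    intro t ht
    have htR : (1:ℝ) ≤ (t:ℝ) := by exact_mod_cast ht
    simp only [hK]
    rw [lt_div_iff₀ (by linarith)]
    have h1 : (9:ℝ) ≤ π ^ 2 := by nlinarith
    have h2 : (1:ℝ) ≤ (t:ℝ) ^ 2 := by nlinarith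
    have h3 : (9:ℝ) ≤ π ^ 2 * N := by nlinarith
    have h4 : (9:ℝ) ≤ π ^ 2 * N * t ^ 2 := by nlinarith
    linarith
  have hlogK : ∀ t : ℕ, 1 ≤ t → 0 < Real.log (K t) := fun t ht => Real.log_pos (hK1 t ht)
  have hβpos : ∀ t : ℕ, 1 ≤ t → 0 < β t := by
    intro t ht
    have htR : (1:ℝ) ≤ (t:ℝ) := by exact_mod_cast ht
    have h1 : (0:ℝ) < 2 / t * Real.log (K t) := by
      have := hlogK t ht
      have ht0 : (0:ℝ) < (t:ℝ) := by linarith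
      positivity
    exact mul_pos hcpos (Real.sqrt_pos.mpr h1)
  -- the bad events
  set Bad : ℕ × Fin N → Set Ω := fun p =>
    if 1 ≤ p.1 then
      {ω | (p.1 : ℝ) * β p.1 <
        |(∑ s ∈ Finset.Icc 1 p.1, g p.2 s ω) - ∑ s ∈ Finset.Icc 1 p.1, ∫ x, g p.2 s x ∂μ|}
    else ∅ with hBadDef
  have hBadMeas : ∀ p, MeasurableSet (Bad p) := by
    rintro ⟨t, i⟩
    simp only [hBadDef]
    split_ifs with ht
    · have hSmeas : Measurable (fun ω => ∑ s ∈ Finset.Icc 1 t, g i s ω) := by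
        apply Finset.measurable_sum
        intro s hs
        exact hmeas i s (Finset.mem_Icc.mp hs).1
      exact measurableSet_lt measurable_const
        ((hSmeas.sub measurable_const).abs)
    · exact MeasurableSet.empty
  -- per-event bound
  have hBadLe : ∀ p : ℕ × Fin N, μ (Bad p) ≤
      ENNReal.ofReal (6 * δ / π ^ 2 * (1 / (p.1:ℝ) ^ 2) * (1 / N)) := by
    rintro ⟨t, i⟩
    simp only [hBadDef]
    split_ifs with ht
    swap
    · simp
    have htR : (1:ℝ) ≤ (t:ℝ) := by exact_mod_cast ht
    have ht0 : (0:ℝ) < (t:ℝ) := by linarith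
    -- reindex over subtype
    set e : {x // x ∈ Finset.Icc 1 t} ↪ {s : ℕ // 1 ≤ s} :=
      ⟨fun x => ⟨x.1, (Finset.mem_Icc.mp x.2).1⟩, by
        intro x y hxy
        simp only [Subtype.mk.injEq] at hxy
        exact Subtype.ext hxy⟩ with he
    set A : Finset {s : ℕ // 1 ≤ s} := (Finset.Icc 1 t).attach.map e with hA
    have hcard : A.card = t := by
      rw [hA, Finset.card_map, Finset.card_attach, Nat.card_Icc]
      omega
    have hAne : A.Nonempty := by
      rw [hA]
      exact Finset.Nonempty.map (Finset.attach_nonempty_iff.mpr (Finset.nonempty_Icc.mpr ht))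
    have hε : 0 < (t:ℝ) * β t := mul_pos ht0 (hβpos t ht)
    have htail := asap_tail μ A (fun s : {s : ℕ // 1 ≤ s} => g i s)
      (fun a => hmeas i a.1 a.2) (hindep i) hcpos
      (fun a => hbdd i a.1 a.2) hε hAne
    have hsum : ∀ ω : Ω, ∑ a ∈ A, g i a.1 ω = ∑ s ∈ Finset.Icc 1 t, g i s ω := by
      intro ω
      rw [hA, Finset.sum_map]
      exact Finset.sum_attach (Finset.Icc 1 t) (fun s => g i s ω)
    have hsumI : ∑ a ∈ A, ∫ x, g i a.1 x ∂μ = ∑ s ∈ Finset.Icc 1 t, ∫ x, g i s x ∂μ := by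
      rw [hA, Finset.sum_map]
      exact Finset.sum_attach (Finset.Icc 1 t) (fun s => ∫ x, g i s x ∂μ)
    have hseteq : {ω | (t:ℝ) * β t ≤
        |(∑ a ∈ A, g i a.1 ω) - ∑ a ∈ A, ∫ x, g i a.1 x ∂μ|} =
        {ω | (t:ℝ) * β t ≤
        |(∑ s ∈ Finset.Icc 1 t, g i s ω) - ∑ s ∈ Finset.Icc 1 t, ∫ x, g i s x ∂μ|} := by
      ext ω
      rw [Set.mem_setOf_eq, Set.mem_setOf_eq, hsum ω, hsumI]
    rw [hcard, hseteq] at htail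
    refine le_trans (measure_mono ?_) (le_trans htail ?_)
    · intro ω hω
      rw [Set.mem_setOf_eq] at hω ⊢
      exact hω.le
    · -- numerical equality
      refine le_of_eq ?_
      congr 1
      have hsq : ((t:ℝ) * β t) ^ 2 = 2 * t * c ^ 2 * Real.log (K t) := by
        rw [hβ]
        rw [mul_pow, mul_pow, Real.sq_sqrt (le_of_lt (by have := hlogK t ht; positivity))]
        field_simp
      have hexp : -(((t:ℝ) * β t) ^ 2) / (2 * (t:ℝ) * c ^ 2) = -Real.log (K t) := by
        rw [hsq]
        field_simp
      rw [hexp, Real.exp_neg, Real.exp_log (hKpos t ht)]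
      rw [hK]
      have hπ0 : (0:ℝ) < π := by linarith
      have hN0 : (0:ℝ) < (N:ℝ) := by linarith
      field_simp
      ring
  -- union bound
  have hUnion : μ (⋃ p, Bad p) ≤ ENNReal.ofReal δ := by
    refine le_trans (measure_iUnion_le Bad) ?_
    calc ∑' p : ℕ × Fin N, μ (Bad p)
        ≤ ∑' p : ℕ × Fin N,
            ENNReal.ofReal (6 * δ / π ^ 2 * (1 / (p.1:ℝ) ^ 2) * (1 / N)) :=
          ENNReal.tsum_le_tsum hBadLe
      _ = ∑' t : ℕ, ∑' i : Fin N,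
            ENNReal.ofReal (6 * δ / π ^ 2 * (1 / (t:ℝ) ^ 2) * (1 / N)) :=
          ENNReal.tsum_prod (f := fun (t : ℕ) (_ : Fin N) =>
            ENNReal.ofReal (6 * δ / π ^ 2 * (1 / (t:ℝ) ^ 2) * (1 / N)))
      _ = ∑' t : ℕ, ENNReal.ofReal (6 * δ / π ^ 2 * (1 / (t:ℝ) ^ 2)) := by
          refine tsum_congr (fun t => ?_)
          rw [tsum_fintype, Finset.sum_const, Finset.card_univ, Fintype.card_fin,
            nsmul_eq_mul, ← ENNReal.ofReal_natCast N,
            ← ENNReal.ofReal_mul (Nat.cast_nonneg N)]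
          congr 1
          have hNne : (N:ℝ) ≠ 0 := by linarith
          rw [show (N:ℝ) * (6 * δ / π ^ 2 * (1 / (t:ℝ) ^ 2) * (1 / N))
            = 6 * δ / π ^ 2 * (1 / (t:ℝ) ^ 2) * ((N:ℝ) * (1 / N)) from by ring,
            mul_one_div_cancel hNne, mul_one]
      _ = ENNReal.ofReal (∑' t : ℕ, 6 * δ / π ^ 2 * (1 / (t:ℝ) ^ 2)) := by
          rw [ENNReal.ofReal_tsum_of_nonneg]
          · intro t
            positivity
          · exact (hasSum_zeta_two.mul_left _).summable
      _ = ENNReal.ofReal δ := by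
          congr 1
          rw [(hasSum_zeta_two.mul_left (6 * δ / π ^ 2)).tsum_eq]
          have hπ0 : (0:ℝ) < π := by linarith
          field_simp
  -- good event
  have hGood : ENNReal.ofReal (1 - δ) ≤ μ (⋃ p, Bad p)ᶜ := by
    rw [prob_compl_eq_one_sub (MeasurableSet.iUnion hBadMeas)]
    have h1 : ENNReal.ofReal (1 - δ) = 1 - ENNReal.ofReal δ := by
      rw [ENNReal.ofReal_sub 1 hδ0.le, ENNReal.ofReal_one]
    rw [h1]
    exact tsub_le_tsub_left hUnion 1
  refine le_trans hGood (measure_mono ?_)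
  -- the deterministic part
  intro ω hω
  rw [Set.mem_compl_iff] at hω
  have hctrl : ∀ t : ℕ, 1 ≤ t → ∀ j : Fin N,
      |(∑ s ∈ Finset.Icc 1 t, g j s ω) - ∑ s ∈ Finset.Icc 1 t, ∫ x, g j s x ∂μ| ≤
        (t:ℝ) * β t := by
    intro t ht j
    by_contra hcon
    apply hω
    refine Set.mem_iUnion.mpr ⟨(t, j), ?_⟩
    simp only [hBadDef, if_pos ht, Set.mem_setOf_eq]
    exact lt_of_not_ge hcon
  rw [Set.mem_setOf_eq]
  intro t ht i hfire
  have htR : (1:ℝ) ≤ (t:ℝ) := by exact_mod_cast ht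
  have ht0 : (0:ℝ) < (t:ℝ) := by linarith
  have hνt := hν t ht
  have hNν : (0:ℝ) < (N:ℝ) * ν t := by positivity
  have hden := hνpos t ht
  have hρpos : 0 < ρ t := by
    rw [hρ t]
    exact div_pos ht0 hden
  have hTpos : 0 < T t := by
    rw [hT t]
    have h8 : (0:ℝ) < 8 / t * Real.log (π ^ 2 * N * t ^ 2 / (3 * δ)) := by
      have := hlogK t ht
      simp only [hK] at this
      positivity
    have := Real.sqrt_pos.mpr h8
    positivity
  have hθpos : 0 < θ t := by
    rw [hθ t]
    positivity
  set ne : (Finset.univ : Finset (Fin N)).Nonempty := Finset.univ_nonempty_iff.mpr ⟨i⟩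
  have hmain := asap_softmax_lt (fun j => ∑ s ∈ Finset.Icc 1 t, g j s ω) hTpos hθpos i ne hfire
  -- compute T t * log (θ t * N) = -(2 t β t)
  have hlogθN : Real.log (θ t * N) = -((t:ℝ) + Real.log (1 / (N * ν t))) := by
    rw [hθ t, Real.log_mul (by positivity) (by positivity : ((N:ℝ)) ≠ 0),
      Real.log_mul hνt.ne' (Real.exp_ne_zero _), Real.log_exp,
      one_div, Real.log_inv]
    have : Real.log ((N:ℝ) * ν t) = Real.log (N:ℝ) + Real.log (ν t) :=
      Real.log_mul (by positivity) hνt.ne'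
    rw [this]
    ring
  have hsqrt48 : Real.sqrt (8 / t * Real.log (K t)) =
      2 * Real.sqrt (2 / t * Real.log (K t)) := by
    rw [show (8:ℝ) / t * Real.log (K t) = 2 ^ 2 * (2 / t * Real.log (K t)) from by ring,
      Real.sqrt_mul (by norm_num : (0:ℝ) ≤ 2 ^ 2),
      Real.sqrt_sq (by norm_num : (0:ℝ) ≤ 2)]
  have hTlog : T t * Real.log (θ t * N) = -(2 * (t:ℝ) * β t) := by
    have hKt : π ^ 2 * (N:ℝ) * (t:ℝ) ^ 2 / (3 * δ) = K t := rfl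
    rw [hT t, hρ t, hlogθN, hKt, hsqrt48]
    simp only [hβ]
    have hne : (t:ℝ) + Real.log (1 / (N * ν t)) ≠ 0 := hden.ne'
    field_simp
  rw [hTlog] at hmain
  obtain ⟨j, _, hMj⟩ := Finset.exists_mem_eq_sup' ne (fun j => ∑ s ∈ Finset.Icc 1 t, g j s ω)
  have hcti := (abs_le.mp (hctrl t ht i)).1
  have hctj := (abs_le.mp (hctrl t ht j)).2
  have hβt := hβpos t ht
  have hsupm : (∑ s ∈ Finset.Icc 1 t, ∫ x, g j s x ∂μ) ≤
      Finset.univ.sup' ne (fun j => ∑ s ∈ Finset.Icc 1 t, ∫ x, g j s x ∂μ) :=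
    Finset.le_sup' (fun j => ∑ s ∈ Finset.Icc 1 t, ∫ x, g j s x ∂μ) (Finset.mem_univ j)
  rw [hMj] at hmain
  have h0 : (0:ℝ) < (t:ℝ) * β t := mul_pos ht0 hβt
  calc (∑ s ∈ Finset.Icc 1 t, ∫ x, g i s x ∂μ)
      ≤ (∑ s ∈ Finset.Icc 1 t, g i s ω) + (t:ℝ) * β t := by linarith
    _ < (∑ s ∈ Finset.Icc 1 t, g j s ω) - (t:ℝ) * β t := by linarith
    _ ≤ (∑ s ∈ Finset.Icc 1 t, ∫ x, g j s x ∂μ) := by linarith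
    _ ≤ _ := hsupm
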